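/- Let A be an m × n complex matrix, Ω a k × n complex matrix, and P an m × m permutation matrix. Suppose P·A·Ω* = L·U₁ where L is an m × k complex matrix with linearly independent columns and U₁ is an invertible k × k matrix. Then for every k × n complex matrix X, ‖P·A − L·(L*L)⁻¹·L*·(P·A)‖_F ≤ ‖(P·A)·Ω*·X − P·A‖_F. (Here L·(L*L)⁻¹·L* is the orthogonal projection onto the column space of L, which coincides with L·L†·(P·A) for the Moore–Penrose pseudoinverse L†.) -/

import Mathlib

open Matrix

/-- The Frobenius norm of a complex matrix. -/
noncomputable def frobNorm {m n : ℕ} (A : Matrix (Fin m) (Fin n) ℂ) : ℝ :=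
  Real.sqrt (∑ i, ∑ j, ‖A i j‖ ^ 2)

lemma cross_zero {m n : ℕ} {M N : Matrix (Fin m) (Fin n) ℂ} (h : Mᴴ * N = 0) :
    ∑ i, ∑ j, (starRingEnd ℂ) (M i j) * N i j = 0 := by
  rw [Finset.sum_comm]
  have : ∀ j, ∑ i, (starRingEnd ℂ) (M i j) * N i j = 0 := by
    intro j
    have := congrFun (congrFun h j) j
    simpa [Matrix.mul_apply, Matrix.conjTranspose_apply] using this
  simp [this]

lemma norm_sq_eq (z : ℂ) : ‖z‖ ^ 2 = ((starRingEnd ℂ) z * z).re := by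
  rw [Complex.sq_norm, mul_comm, Complex.mul_conj]
  simp

lemma frob_pyth {m n : ℕ} (M N : Matrix (Fin m) (Fin n) ℂ) (h : Mᴴ * N = 0) :
    frobNorm N ≤ frobNorm (M - N) := by
  unfold frobNorm
  apply Real.sqrt_le_sqrt
  have hc := cross_zero h
  have hc' : ∑ i, ∑ j, (starRingEnd ℂ) (N i j) * M i j = 0 := by
    have := congrArg (starRingEnd ℂ) hc
    simpa [map_sum, mul_comm] using this
  have hcre : ∑ i, ∑ j, ((starRingEnd ℂ) (M i j) * N i j).re = 0 := by
    have := congrArg Complex.re hc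
    simpa [Complex.re_sum] using this
  have hcre' : ∑ i, ∑ j, ((starRingEnd ℂ) (N i j) * M i j).re = 0 := by
    have := congrArg Complex.re hc'
    simpa [Complex.re_sum] using this
  have e1 : ∀ i j, ‖(M - N) i j‖ ^ 2 = ‖M i j‖ ^ 2 + ‖N i j‖ ^ 2
      - ((starRingEnd ℂ) (M i j) * N i j).re - ((starRingEnd ℂ) (N i j) * M i j).re := by
    intro i j
    rw [Matrix.sub_apply, norm_sq_eq, norm_sq_eq, norm_sq_eq]
    have hexp : (starRingEnd ℂ) (M i j - N i j) * (M i j - N i j) =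
        (starRingEnd ℂ) (M i j) * M i j + (starRingEnd ℂ) (N i j) * N i j
        - (starRingEnd ℂ) (M i j) * N i j - (starRingEnd ℂ) (N i j) * M i j := by
      rw [map_sub]; ring
    rw [hexp, Complex.sub_re, Complex.sub_re, Complex.add_re]
  have key : ∑ i, ∑ j, ‖(M - N) i j‖ ^ 2 =
      (∑ i, ∑ j, ‖M i j‖ ^ 2) + ∑ i, ∑ j, ‖N i j‖ ^ 2 := by
    simp only [e1, Finset.sum_sub_distrib, Finset.sum_add_distrib, hcre, hcre']
    ring
  rw [key]
  have : (0:ℝ) ≤ ∑ i, ∑ j, ‖M i j‖ ^ 2 :=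
    Finset.sum_nonneg fun i _ => Finset.sum_nonneg fun j _ => by positivity
  linarith

theorem LU_projection_best {m n k : ℕ}
    (A : Matrix (Fin m) (Fin n) ℂ) (Ω : Matrix (Fin k) (Fin n) ℂ)
    (P : Matrix (Fin m) (Fin m) ℂ)
    (hP : ∃ σ : Equiv.Perm (Fin m), ∀ i j, P i j = if σ i = j then 1 else 0)
    (L : Matrix (Fin m) (Fin k) ℂ) (U₁ : Matrix (Fin k) (Fin k) ℂ)
    (hLU : P * A * Ωᴴ = L * U₁)
    (hL : IsUnit (Lᴴ * L)) (hU₁ : IsUnit U₁)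
    (X : Matrix (Fin k) (Fin n) ℂ) :
    frobNorm (P * A - L * (Lᴴ * L)⁻¹ * Lᴴ * (P * A)) ≤
      frobNorm ((P * A) * Ωᴴ * X - P * A) := by
  set B := P * A with hB
  have hinv : (Lᴴ * L) * (Lᴴ * L)⁻¹ = 1 :=
    Matrix.mul_nonsing_inv _ ((Matrix.isUnit_iff_isUnit_det _).mp hL)
  set N := B - L * (Lᴴ * L)⁻¹ * Lᴴ * B with hN
  set M := L * (U₁ * X - (Lᴴ * L)⁻¹ * (Lᴴ * B)) with hM
  have hLN : Lᴴ * N = 0 := by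
    rw [hN, Matrix.mul_sub]
    have h1 : Lᴴ * (L * (Lᴴ * L)⁻¹ * Lᴴ * B) = Lᴴ * B := by
      calc Lᴴ * (L * (Lᴴ * L)⁻¹ * Lᴴ * B) = ((Lᴴ * L) * (Lᴴ * L)⁻¹) * (Lᴴ * B) := by
            simp only [Matrix.mul_assoc]
        _ = Lᴴ * B := by rw [hinv, Matrix.one_mul]
    rw [h1, sub_self]
  have hMN : Mᴴ * N = 0 := by
    rw [hM, Matrix.conjTranspose_mul, Matrix.mul_assoc, hLN, Matrix.mul_zero]
  have hdiff : B * Ωᴴ * X - B = M - N := by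
    rw [hM, hN, hLU, Matrix.mul_sub]
    simp only [Matrix.mul_assoc]
    abel
  rw [hdiff]
  exact frob_pyth M N hMN
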